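/- Let λ > (1−(n+1)L)^{-1}. Then there exists δ > 0 such that for every nonempty subset f ⊆ {0,…,n} and every s ∈ CR_f one has r_λ(s) + B(δ) ⊆ R_{≤f}; that is, for every b ∈ ℝ^{n+1} with b_0+⋯+b_n = 0 and |b_j| < δ for all j, the point r_λ(s) + b lies in E and satisfies (r_λ(s)+b)_i ≤ 0 for every i ∉ f. -/

import Mathlib

open Finset

noncomputable section

/-- The affine hyperplane `E = {t ∈ ℝ^{n+1} : ∑ tᵢ = 1}`. -/
def planeE (n : ℕ) : Set (Fin (n+1) → ℝ) := {t | ∑ i, t i = 1}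

/-- The standard n-simplex `Σ = {t ∈ E : tᵢ ≥ 0 ∀ i}`. -/
def simplexS (n : ℕ) : Set (Fin (n+1) → ℝ) := {t | ∑ i, t i = 1 ∧ ∀ i, 0 ≤ t i}

/-- `R_f = {t ∈ E : tᵢ ≥ 0 for i ∈ f, tᵢ ≤ 0 for i ∉ f}`. -/
def regionR (n : ℕ) (f : Finset (Fin (n+1))) : Set (Fin (n+1) → ℝ) :=
  {t | ∑ i, t i = 1 ∧ (∀ i ∈ f, 0 ≤ t i) ∧ ∀ i ∉ f, t i ≤ 0}

/-- `R_{≤f} = {t ∈ E : tᵢ ≤ 0 for i ∉ f}`. -/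
def regionRle (n : ℕ) (f : Finset (Fin (n+1))) : Set (Fin (n+1) → ℝ) :=
  {t | ∑ i, t i = 1 ∧ ∀ i ∉ f, t i ≤ 0}

/-- The face `|f| = {t ∈ Σ : tᵢ = 0 for i ∉ f}`. -/
def faceF (n : ℕ) (f : Finset (Fin (n+1))) : Set (Fin (n+1) → ℝ) :=
  {t | (∑ i, t i = 1 ∧ ∀ i, 0 ≤ t i) ∧ ∀ i ∉ f, t i = 0}

/-- `CR_f = {t ∈ Σ : tᵢ ≥ L for i ∈ f, tᵢ ≤ L for i ∉ f}`. -/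
def regionCR (n : ℕ) (L : ℝ) (f : Finset (Fin (n+1))) : Set (Fin (n+1) → ℝ) :=
  {t | (∑ i, t i = 1 ∧ ∀ i, 0 ≤ t i) ∧ (∀ i ∈ f, L ≤ t i) ∧ ∀ i ∉ f, t i ≤ L}

/-- The barycentre `ξ_f` of the face `|f|`. -/
def bary (n : ℕ) (f : Finset (Fin (n+1))) : Fin (n+1) → ℝ :=
  fun i => if i ∈ f then (f.card : ℝ)⁻¹ else 0

/-- The retraction `q : E → Σ`, `q(t) = [max(t₀,0),…,max(tₙ,0)]`. -/
def retr (n : ℕ) (t : Fin (n+1) → ℝ) : Fin (n+1) → ℝ :=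
  fun i => (∑ j, max (t j) 0)⁻¹ * max (t i) 0

/-- The collapsing map `C_Σ : Σ → Σ`, `C_Σ(t) = [min(t₀,L),…,min(tₙ,L)]`. -/
def collapse (n : ℕ) (L : ℝ) (t : Fin (n+1) → ℝ) : Fin (n+1) → ℝ :=
  fun i => (∑ j, min (t j) L)⁻¹ * min (t i) L

/-- The radial expansion `r_λ : E → E`. -/
def rexp (n : ℕ) (lam : ℝ) (t : Fin (n+1) → ℝ) : Fin (n+1) → ℝ :=
  fun i => lam * t i - (lam - 1) / ((n : ℝ) + 1)

/-- Lemma 5.5 (lem:expand_CRf): if λ > (1-(n+1)L)⁻¹ then there is δ > 0 with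
r_λ(s) + B(δ) ⊆ R_{≤f} for all nonempty f and all s ∈ CR_f. -/
theorem stmt0 (n : ℕ) (L lam : ℝ) (hL0 : 0 < L) (hL1 : L < 1 / ((n : ℝ) + 1))
    (hlam : (1 - ((n : ℝ) + 1) * L)⁻¹ < lam) :
    ∃ δ > (0 : ℝ), ∀ f : Finset (Fin (n+1)), f.Nonempty →
      ∀ s ∈ regionCR n L f, ∀ b : Fin (n+1) → ℝ,
        (∑ j, b j = 0) → (∀ j, |b j| < δ) →
          (fun i => rexp n lam s i + b i) ∈ regionRle n f := by
  have hn : (0:ℝ) < (n:ℝ) + 1 := by positivity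
  have h1 : (0:ℝ) < 1 - ((n:ℝ)+1) * L := by
    have := (lt_div_iff₀ hn).mp hL1
    nlinarith
  have hlam1 : 1 < lam * (1 - ((n:ℝ)+1) * L) := by
    have := (inv_lt_iff_one_lt_mul₀ h1).mp hlam
    linarith [this]
  set δ : ℝ := (lam - 1) / ((n:ℝ)+1) - lam * L with hδdef
  have hδ : 0 < δ := by
    rw [hδdef, sub_pos, lt_div_iff₀ hn]
    nlinarith
  refine ⟨δ, hδ, fun f hf s hs b hb hbδ => ?_⟩
  obtain ⟨⟨hsum, hpos⟩, hin, hout⟩ := hs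
  constructor
  · simp only [rexp]
    rw [Finset.sum_add_distrib, hb, Finset.sum_sub_distrib, ← Finset.mul_sum, hsum]
    simp [Finset.card_fin]
    field_simp
    ring
  · intro i hi
    have h1 : s i ≤ L := hout i hi
    have h2 := abs_lt.mp (hbδ i)
    simp only [rexp]
    have : lam * s i ≤ lam * L := by
      have hlampos : 0 < lam := by nlinarith
      nlinarith
    rw [hδdef] at h2
    linarith [h2.2]
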